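/- Let C be the polar code of length 2^m with frozen set F ⊆ [2^m], i.e., C = {u·A_m : u ∈ F2^{2^m}, u_i = 0 for all i ∈ F}. Let F0 = F ∩ [2^{m-1}] and F1 = {j : j + 2^{m-1} ∈ F}, and let C0, C1 be the polar codes of length 2^{m-1} with frozen sets F0, F1. Then C = {(u + v, v) : u ∈ C0, v ∈ C1} (Plotkin decomposition). -/

import Mathlib

/-- Arıkan's kernel F = [[1,0],[1,1]] over F2. -/
def Fk : Matrix (Fin 2) (Fin 2) (ZMod 2) := !![1, 0; 1, 1]

/-- A_m = F^{⊗m}: the m-fold Kronecker power of F, with standard Kronecker indexing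
(A ⊗ B)_{(i1·n+i2),(j1·n+j2)} = A_{i1,j1}·B_{i2,j2}. -/
def Amat : (m : ℕ) → Matrix (Fin (2 ^ m)) (Fin (2 ^ m)) (ZMod 2)
  | 0 => 1
  | m + 1 => Matrix.of fun i j =>
      Fk ⟨i.val / 2 ^ m, Nat.div_lt_of_lt_mul (by rw [← pow_succ]; exact i.isLt)⟩
         ⟨j.val / 2 ^ m, Nat.div_lt_of_lt_mul (by rw [← pow_succ]; exact j.isLt)⟩ *
      Amat m ⟨i.val % 2 ^ m, Nat.mod_lt _ (Nat.two_pow_pos m)⟩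
             ⟨j.val % 2 ^ m, Nat.mod_lt _ (Nat.two_pow_pos m)⟩

lemma pow_split (m : ℕ) : (2:ℕ)^(m+1) = 2^m + 2^m := by rw [pow_succ, mul_two]

lemma lt_lo {m : ℕ} (r : Fin (2^m)) : r.val < 2^(m+1) := by
  have := r.isLt; have := pow_split m; omega

lemma lt_hi {m : ℕ} (r : Fin (2^m)) : r.val + 2^m < 2^(m+1) := by
  have := r.isLt; have := pow_split m; omega

lemma key (m : ℕ) (w : Fin (2^(m+1)) → ZMod 2) (j : Fin (2^(m+1))) :
    Matrix.vecMul w (Amat (m+1)) j =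
      if h : j.val < 2^m then
        Matrix.vecMul (fun r => w ⟨r.val, lt_lo r⟩) (Amat m) ⟨j.val, h⟩
        + Matrix.vecMul (fun r => w ⟨r.val + 2^m, lt_hi r⟩) (Amat m) ⟨j.val, h⟩
      else
        Matrix.vecMul (fun r => w ⟨r.val + 2^m, lt_hi r⟩) (Amat m)
          ⟨j.val - 2^m, Nat.sub_lt_left_of_lt_add (not_lt.mp h)
            (by have := j.isLt; have := pow_split m; omega)⟩ := by
  have h2 := pow_split m
  simp only [Matrix.vecMul, dotProduct]
  have hre : ∀ f : Fin (2^(m+1)) → ZMod 2, ∑ i, f i =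
      (∑ r : Fin (2^m), f ⟨r.val, lt_lo r⟩) + ∑ r : Fin (2^m), f ⟨r.val + 2^m, lt_hi r⟩ := by
    intro f
    rw [← Fintype.sum_equiv (finCongr h2.symm) (fun i => f (finCongr h2.symm i)) f (fun i => rfl),
        Fin.sum_univ_add]
    congr 1
    apply Finset.sum_congr rfl; intro r _
    congr 1
    apply Fin.ext
    simp [Fin.natAdd]
    omega
  rw [hre]
  have hAlo : ∀ (r : Fin (2^m)), Amat (m+1) ⟨r.val, lt_lo r⟩ j =
      Fk 0 ⟨j.val / 2^m, Nat.div_lt_of_lt_mul (by rw [← pow_succ]; exact j.isLt)⟩ *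
      Amat m r ⟨j.val % 2 ^ m, Nat.mod_lt _ (Nat.two_pow_pos m)⟩ := by
    intro r
    show Fk _ _ * Amat m _ _ = _
    congr 1
    · congr 1
      apply Fin.ext; simp
    · apply congrArg (Amat m · _); apply Fin.ext; simp [Nat.mod_eq_of_lt r.isLt]
  have hAhi : ∀ (r : Fin (2^m)), Amat (m+1) ⟨r.val + 2^m, lt_hi r⟩ j =
      Fk 1 ⟨j.val / 2^m, Nat.div_lt_of_lt_mul (by rw [← pow_succ]; exact j.isLt)⟩ *
      Amat m r ⟨j.val % 2 ^ m, Nat.mod_lt _ (Nat.two_pow_pos m)⟩ := by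
    intro r
    show Fk _ _ * Amat m _ _ = _
    congr 1
    · congr 1
      apply Fin.ext; simp
    · apply congrArg (Amat m · _); apply Fin.ext; simp
      exact Nat.mod_eq_of_lt r.isLt
  simp only [hAlo, hAhi]
  by_cases h : j.val < 2^m
  · rw [dif_pos h]
    have hj0 : (⟨j.val / 2^m, Nat.div_lt_of_lt_mul (by rw [← pow_succ]; exact j.isLt)⟩ : Fin 2)
        = 0 := by
      apply Fin.ext; simpa using Nat.div_eq_of_lt h
    have hjm : (⟨j.val % 2^m, Nat.mod_lt _ (Nat.two_pow_pos m)⟩ : Fin (2^m)) = ⟨j.val, h⟩ := by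
      apply Fin.ext; simpa using Nat.mod_eq_of_lt h
    rw [hj0, hjm]
    simp [show Fk 0 0 = 1 from by decide, show Fk 1 0 = 1 from by decide]
  · rw [dif_neg h]
    have hge : 2^m ≤ j.val := not_lt.mp h
    have hlt : j.val < 2^m + 2^m := by have := j.isLt; omega
    have hj1 : (⟨j.val / 2^m, Nat.div_lt_of_lt_mul (by rw [← pow_succ]; exact j.isLt)⟩ : Fin 2)
        = 1 := by
      apply Fin.ext
      simpa using Nat.div_eq_of_lt_le (by simpa using hge) (by omega)
    have hjm : (⟨j.val % 2^m, Nat.mod_lt _ (Nat.two_pow_pos m)⟩ : Fin (2^m))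
        = ⟨j.val - 2^m, by omega⟩ := by
      apply Fin.ext
      simp only [Nat.mod_eq_sub_mod hge]
      exact Nat.mod_eq_of_lt (by omega)
    rw [hj1, hjm]
    simp [show Fk 0 1 = 0 from by decide, show Fk 1 1 = 1 from by decide]

/-- The polar code of length 2^m with frozen set `Fr`: all vectors `u·A_m`
with `u_i = 0` for `i ∈ Fr`. -/
def polarCode (m : ℕ) (Fr : Set (Fin (2 ^ m))) : Set (Fin (2 ^ m) → ZMod 2) :=
  {c | ∃ u : Fin (2 ^ m) → ZMod 2, (∀ i ∈ Fr, u i = 0) ∧ c = Matrix.vecMul u (Amat m)}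

/-- Minimum distance of a (linear) code: the least Hamming weight of a nonzero codeword. -/
noncomputable def minDist {n : ℕ} (C : Set (Fin n → ZMod 2)) : ℕ :=
  sInf {w | ∃ c ∈ C, c ≠ 0 ∧ hammingNorm c = w}

/-- Plotkin decomposition of a polar code: with F0 = F ∩ [2^m] and
F1 = {j : j + 2^m ∈ F}, one has C = {(u+v | v) : u ∈ C0, v ∈ C1}. -/
theorem stmt4 (m : ℕ) (Fr : Set (Fin (2 ^ (m + 1)))) :
    polarCode (m + 1) Fr =
      {c | ∃ u ∈ polarCode m {i : Fin (2 ^ m) |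
              (⟨i.val, by have := i.isLt; have h : (2:ℕ)^(m+1) = 2^m * 2 := pow_succ 2 m; omega⟩ :
                Fin (2 ^ (m + 1))) ∈ Fr},
           ∃ v ∈ polarCode m {j : Fin (2 ^ m) |
              (⟨j.val + 2 ^ m, by have := j.isLt; have h : (2:ℕ)^(m+1) = 2^m * 2 := pow_succ 2 m; omega⟩ :
                Fin (2 ^ (m + 1))) ∈ Fr},
           c = fun k : Fin (2 ^ (m + 1)) =>
             if h : k.val < 2 ^ m then u ⟨k.val, h⟩ + v ⟨k.val, h⟩
             else v ⟨k.val - 2 ^ m, by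
               have := k.isLt; have h2 : (2:ℕ)^(m+1) = 2^m * 2 := pow_succ 2 m; omega⟩} := by
  ext c
  constructor
  · rintro ⟨w, hw, rfl⟩
    refine ⟨Matrix.vecMul (fun r => w ⟨r.val, lt_lo r⟩) (Amat m),
      ⟨_, fun i hi => hw _ hi, rfl⟩,
      Matrix.vecMul (fun r => w ⟨r.val + 2^m, lt_hi r⟩) (Amat m),
      ⟨_, fun i hi => hw _ hi, rfl⟩, ?_⟩
    funext k
    rw [key m w k]
  · rintro ⟨u, ⟨u0, hu0, rfl⟩, v, ⟨u1, hu1, rfl⟩, rfl⟩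
    refine ⟨fun k => if h : k.val < 2^m then u0 ⟨k.val, h⟩
        else u1 ⟨k.val - 2^m, by have := k.isLt; have := pow_split m; omega⟩, ?_, ?_⟩
    · intro i hi
      by_cases h : i.val < 2^m
      · simp only [dif_pos h]
        refine hu0 ⟨i.val, h⟩ ?_
        show (⟨i.val, _⟩ : Fin (2^(m+1))) ∈ Fr
        convert hi using 2
      · simp only [dif_neg h]
        refine hu1 ⟨i.val - 2^m, _⟩ ?_
        show (⟨i.val - 2^m + 2^m, _⟩ : Fin (2^(m+1))) ∈ Fr
        have : i.val - 2^m + 2^m = i.val := by omega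
        convert hi using 2
    · funext k
      rw [key m _ k]
      have e1 : (fun r : Fin (2^m) => if h : (⟨r.val, lt_lo r⟩ : Fin (2^(m+1))).val < 2^m
            then u0 ⟨(⟨r.val, lt_lo r⟩ : Fin (2^(m+1))).val, h⟩
            else u1 ⟨(⟨r.val, lt_lo r⟩ : Fin (2^(m+1))).val - 2^m, by
              have := (⟨r.val, lt_lo r⟩ : Fin (2^(m+1))).isLt; have := pow_split m; omega⟩) = u0 := by
        funext r
        rw [dif_pos r.isLt]
      have e2 : (fun r : Fin (2^m) => if h : (⟨r.val + 2^m, lt_hi r⟩ : Fin (2^(m+1))).val < 2^m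
            then u0 ⟨(⟨r.val + 2^m, lt_hi r⟩ : Fin (2^(m+1))).val, h⟩
            else u1 ⟨(⟨r.val + 2^m, lt_hi r⟩ : Fin (2^(m+1))).val - 2^m, by
              have := (⟨r.val + 2^m, lt_hi r⟩ : Fin (2^(m+1))).isLt; have := pow_split m; omega⟩)
          = u1 := by
        funext r
        rw [dif_neg (by simp)]
        congr 1
        apply Fin.ext
        simp
      rw [e1, e2]
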